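/- arXiv:2207.11954 — 6 statements merged into one kernel-verified Lean document; each statement's English description precedes it below -/
import Mathlib

section
/- Let a : ℕ → ℤ be an array with unit steps, i.e. |a(t+1) − a(t)| = 1 for all t ∈ ℕ. Let i ≥ 1 and let x be an integer with x < a(i); set d = a(i) − x. Let p be the natural number with 2^p ≤ d < 2^(p+1), and let i₁ = ⌊(i−1)/2^p⌋·2^p + 1 (floor division of natural numbers). Then for every index j with i₁ ≤ j ≤ i one has a(j) > x. -/
lemma unit_step_diff (a : ℕ → ℤ) (hstep : ∀ t : ℕ, |a (t + 1) - a t| = 1) :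
    ∀ n m : ℕ, |a (n + m) - a n| ≤ (m : ℤ) := by
  intro n m
  induction m with
  | zero => simp
  | succ k ih =>
    have h := hstep (n + k)
    calc |a (n + (k + 1)) - a n|
        = |(a (n + k + 1) - a (n + k)) + (a (n + k) - a n)| := by ring_nf
      _ ≤ |a (n + k + 1) - a (n + k)| + |a (n + k) - a n| := abs_add_le _ _
      _ ≤ 1 + k := by rw [h]; linarith
      _ = ((k + 1 : ℕ) : ℤ) := by push_cast; ring

/-- for an array with unit steps, every entry between the jump-back
index `i₁` and `i` is strictly greater than `x`. -/
theorem stmt_0 (a : ℕ → ℤ)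
    (hstep : ∀ t : ℕ, |a (t + 1) - a t| = 1)
    (i : ℕ) (hi : 1 ≤ i) (x : ℤ) (hx : x < a i)
    (d : ℤ) (hd : d = a i - x)
    (p : ℕ) (hp₁ : (2 : ℤ) ^ p ≤ d) (hp₂ : d < 2 ^ (p + 1))
    (i₁ : ℕ) (hi₁ : i₁ = (i - 1) / 2 ^ p * 2 ^ p + 1) :
    ∀ j : ℕ, i₁ ≤ j → j ≤ i → x < a j := by
  intro j hj₁ hj₂
  have hij : i - j < 2 ^ p := by
    have hmod : (i - 1) % 2 ^ p < 2 ^ p := Nat.mod_lt _ (Nat.pow_pos (by norm_num))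
    have hdm : (i - 1) / 2 ^ p * 2 ^ p + (i - 1) % 2 ^ p = i - 1 := Nat.div_add_mod' _ _
    omega
  have hdiff : |a (j + (i - j)) - a j| ≤ ((i - j : ℕ) : ℤ) := unit_step_diff a hstep j (i - j)
  rw [Nat.add_sub_cancel' hj₂] at hdiff
  have h1 : a i - a j ≤ ((i - j : ℕ) : ℤ) := (abs_le.mp hdiff).2
  have h2 : ((i - j : ℕ) : ℤ) < 2 ^ p := by exact_mod_cast Nat.cast_lt.mpr hij
  linarith
end

section
/- Let a : ℕ → ℤ be an array with unit steps, i.e. |a(t+1) − a(t)| = 1 for all t ∈ ℕ. Let i ≥ 1 and let x be an integer with x < a(i); set d = a(i) − x. Let p be the natural number with 2^p ≤ d < 2^(p+1), and let i₁ = ⌊(i−1)/2^p⌋·2^p + 1 (floor division of natural numbers). Then the first element to the right of position i with value at most x is also the first element to the right of position i₁ with value at most x; formally, the set {j : j ≥ i ∧ a(j) ≤ x} equals the set {j : j ≥ i₁ ∧ a(j) ≤ x}, and in particular their infima coincide. -/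
lemma lipschitz_aux (a : ℕ → ℤ) (hstep : ∀ t : ℕ, |a (t + 1) - a t| = 1) :
    ∀ j k : ℕ, a (j + k) - a j ≤ k ∧ a j - a (j + k) ≤ k := by
  intro j k
  induction k with
  | zero => simp
  | succ k ih =>
    have h := hstep (j + k)
    have h1 : a (j + k + 1) - a (j + k) ≤ 1 := by
      have := abs_le.mp h.le; exact this.2
    have h2 : a (j + k) - a (j + k + 1) ≤ 1 := by
      have := abs_le.mp h.le; linarith [this.1]
    have e : j + (k + 1) = j + k + 1 := rfl
    rw [e]
    push_cast
    constructor
    · linarith [ih.1]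
    · linarith [ih.2]


/-- the first element to the right of `i` with value at most `x`
is also the first element to the right of `i₁` with value at most `x`. -/
theorem stmt_1 (a : ℕ → ℤ)
    (hstep : ∀ t : ℕ, |a (t + 1) - a t| = 1)
    (i : ℕ) (hi : 1 ≤ i) (x : ℤ) (hx : x < a i)
    (d : ℤ) (hd : d = a i - x)
    (p : ℕ) (hp₁ : (2 : ℤ) ^ p ≤ d) (hp₂ : d < 2 ^ (p + 1))
    (i₁ : ℕ) (hi₁ : i₁ = (i - 1) / 2 ^ p * 2 ^ p + 1) :
    {j : ℕ | i ≤ j ∧ a j ≤ x} = {j : ℕ | i₁ ≤ j ∧ a j ≤ x} ∧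
      sInf {j : ℕ | i ≤ j ∧ a j ≤ x} = sInf {j : ℕ | i₁ ≤ j ∧ a j ≤ x} := by
  have hle : i₁ ≤ i := by
    subst hi₁
    have := Nat.div_mul_le_self (i - 1) (2 ^ p)
    omega
  have hkey : ∀ j : ℕ, i₁ ≤ j → a j ≤ x → i ≤ j := by
    intro j hj haj
    by_contra hji
    push_neg at hji
    -- j < i, and i - j < 2^p ≤ d
    have hmod : i - i₁ < 2 ^ p := by
      subst hi₁
      have hml := Nat.mod_lt (i - 1) (show 0 < 2 ^ p from Nat.pow_pos (by norm_num))
      have hdm := Nat.div_add_mod (i - 1) (2 ^ p)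
      rw [Nat.mul_comm] at hdm
      set s := (i - 1) / 2 ^ p * 2 ^ p with hs
      omega
    have hk : i - j < 2 ^ p := by omega
    have hlip := (lipschitz_aux a hstep j (i - j)).1
    have hji' : j + (i - j) = i := by omega
    rw [hji'] at hlip
    have hkd : ((i - j : ℕ) : ℤ) < d := by
      have : ((i - j : ℕ) : ℤ) < (2 : ℤ) ^ p := by exact_mod_cast hk
      linarith
    linarith
  have hset : {j : ℕ | i ≤ j ∧ a j ≤ x} = {j : ℕ | i₁ ≤ j ∧ a j ≤ x} := by
    ext j
    simp only [Set.mem_setOf_eq]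
    exact ⟨fun ⟨h1, h2⟩ => ⟨le_trans hle h1, h2⟩, fun ⟨h1, h2⟩ => ⟨hkey j h1 h2, h2⟩⟩
  exact ⟨hset, by rw [hset]⟩
end

section
/- Let a : ℕ → ℤ be an array with unit steps, i.e. |a(t+1) − a(t)| = 1 for all t ∈ ℕ. Let i ≥ 1 and let x be an integer with x < a(i); set d = a(i) − x. Let p be the natural number with 2^p ≤ d < 2^(p+1), and let i₁ = ⌊(i−1)/2^p⌋·2^p + 1 (floor division of natural numbers). Then 0 < a(i₁) − x < 3·2^p. -/
lemma lip (a : ℕ → ℤ) (hstep : ∀ t : ℕ, |a (t + 1) - a t| = 1) :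
    ∀ k n : ℕ, |a (n + k) - a n| ≤ k := by
  intro k
  induction k with
  | zero => simp
  | succ k ih =>
    intro n
    calc |a (n + (k+1)) - a n| = |(a (n + k + 1) - a (n + k)) + (a (n + k) - a n)| := by
          ring_nf
    _ ≤ |a (n + k + 1) - a (n + k)| + |a (n + k) - a n| := abs_add_le _ _
    _ ≤ 1 + k := by have := hstep (n + k); rw [this]; linarith [ih n]
    _ = ((k + 1 : ℕ) : ℤ) := by push_cast; ring

/-- the query offset `a i₁ - x` lies strictly between `0` and `3·2^p`. -/
theorem stmt_2 (a : ℕ → ℤ)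
    (hstep : ∀ t : ℕ, |a (t + 1) - a t| = 1)
    (i : ℕ) (hi : 1 ≤ i) (x : ℤ) (hx : x < a i)
    (d : ℤ) (hd : d = a i - x)
    (p : ℕ) (hp₁ : (2 : ℤ) ^ p ≤ d) (hp₂ : d < 2 ^ (p + 1))
    (i₁ : ℕ) (hi₁ : i₁ = (i - 1) / 2 ^ p * 2 ^ p + 1) :
    0 < a i₁ - x ∧ a i₁ - x < 3 * 2 ^ p := by
  set k := (i - 1) % 2 ^ p with hk
  have hile : i₁ + k = i := by
    rw [hi₁, hk]
    have h1 := Nat.div_add_mod (i - 1) (2 ^ p)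
    have h2 : (i - 1) / 2 ^ p * 2 ^ p = 2 ^ p * ((i - 1) / 2 ^ p) := Nat.mul_comm _ _
    omega
  have hklt : k < 2 ^ p := Nat.mod_lt _ (by positivity)
  have hlip : |a i - a i₁| ≤ (k : ℤ) := by
    have := lip a hstep k i₁
    rwa [hile] at this
  have habs := abs_le.mp hlip
  have hk2 : (k : ℤ) < 2 ^ p := by exact_mod_cast hklt
  have h2 : (2 : ℤ) ^ (p + 1) = 2 * 2 ^ p := by ring
  constructor <;> [nlinarith; nlinarith]
end

section
/- Let a : ℕ → ℤ be an array with unit steps, i.e. |a(t+1) − a(t)| = 1 for all t ∈ ℕ. Let i ≥ 1 and let x be an integer with x < a(i); set d = a(i) − x. Let p be the natural number with 2^p ≤ d < 2^(p+1), and let i₁ = ⌊(i−1)/2^p⌋·2^p + 1 (floor division of natural numbers). Then the infimum of the set {h : h > i₁ ∧ a(h) ≤ a(i₁) − (a(i₁) − x)} equals the infimum of the set {j : j ≥ i ∧ a(j) ≤ x}; that is, returning the FAR entry FAR_{i₁}[a(i₁) − x] correctly answers the query FS(i,x). -/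
private lemma unit_ub (a : ℕ → ℤ) (hstep : ∀ t : ℕ, |a (t + 1) - a t| = 1) :
    ∀ m n : ℕ, m ≤ n → a n ≤ a m + (n - m : ℕ) := by
  intro m n hmn
  induction n, hmn using Nat.le_induction with
  | base => simp
  | succ n hmn ih =>
    have h1 : a (n + 1) - a n ≤ 1 := (abs_le.mp (le_of_eq (hstep n))).2
    have h2 : ((n + 1 - m : ℕ) : ℤ) = (n - m : ℕ) + 1 := by
      omega
    rw [h2]
    linarith

/-- the FAR entry `FAR_{i₁}[a i₁ - x]` correctly answers the query
`FS(i, x)`. -/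
theorem stmt_3 (a : ℕ → ℤ)
    (hstep : ∀ t : ℕ, |a (t + 1) - a t| = 1)
    (i : ℕ) (hi : 1 ≤ i) (x : ℤ) (hx : x < a i)
    (d : ℤ) (hd : d = a i - x)
    (p : ℕ) (hp₁ : (2 : ℤ) ^ p ≤ d) (hp₂ : d < 2 ^ (p + 1))
    (i₁ : ℕ) (hi₁ : i₁ = (i - 1) / 2 ^ p * 2 ^ p + 1) :
    sInf {h : ℕ | i₁ < h ∧ a h ≤ a i₁ - (a i₁ - x)} =
      sInf {j : ℕ | i ≤ j ∧ a j ≤ x} := by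
  have hi₁le : i₁ ≤ i := by
    have := Nat.div_mul_le_self (i - 1) (2 ^ p)
    omega
  have hgap : i - i₁ < 2 ^ p := by
    have h1 : (i - 1) / 2 ^ p * 2 ^ p + (i - 1) % 2 ^ p = i - 1 := by
      rw [Nat.mul_comm]; exact Nat.div_add_mod _ _
    have h2 : (i - 1) % 2 ^ p < 2 ^ p := Nat.mod_lt _ (Nat.pow_pos (by norm_num))
    omega
  have hsets : {h : ℕ | i₁ < h ∧ a h ≤ a i₁ - (a i₁ - x)} = {j : ℕ | i ≤ j ∧ a j ≤ x} := by
    ext n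
    simp only [Set.mem_setOf_eq]
    constructor
    · rintro ⟨hn1, hn2⟩
      have hax : a n ≤ x := by linarith
      refine ⟨?_, hax⟩
      by_contra hni
      push_neg at hni
      -- i₁ < n < i, so i - n < 2^p, hence a n > x
      have hub := unit_ub a hstep n i (le_of_lt hni)
      have hcast : ((i - n : ℕ) : ℤ) < 2 ^ p := by
        have : i - n < 2 ^ p := by omega
        exact_mod_cast this
      have hpow : ((2 : ℤ) ^ p : ℤ) = (2 : ℤ) ^ p := rfl
      have : a i < a n + 2 ^ p := by linarith
      have : x < a n := by linarith
      linarith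
    · rintro ⟨hn1, hn2⟩
      have hni : i < n := by
        rcases lt_or_eq_of_le hn1 with h | h
        · exact h
        · exfalso; rw [← h] at hn2; linarith
      exact ⟨by omega, by linarith⟩
  rw [hsets]
end

section
/- For every natural number n ≥ 1, the sum over m from 1 to n of 3·2^{ν₂(m)}, where ν₂(m) denotes the 2-adic valuation of m (the exponent of the largest power of 2 dividing m), is at most 3·n·(⌊log₂ n⌋ + 3). In particular, the total size of all FAR arrays, where the array attached to index i has 3·2^{ν₂(i−1)} entries, is O(n log n). -/
open Finset

lemma aux_even_sum (n : ℕ) :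
    ∑ m ∈ (Finset.Icc 1 n).filter (fun m => ¬ Odd m), 2 ^ padicValNat 2 m
      = 2 * ∑ k ∈ Finset.Icc 1 (n / 2), 2 ^ padicValNat 2 k := by
  rw [Finset.mul_sum]
  apply Finset.sum_nbij' (fun m => m / 2) (fun k => 2 * k)
  · intro m hm
    simp only [Finset.mem_filter, Finset.mem_Icc, Nat.not_odd_iff_even] at hm ⊢
    obtain ⟨⟨h1, h2⟩, he⟩ := hm
    obtain ⟨c, rfl⟩ := he
    omega
  · intro k hk
    simp only [Finset.mem_filter, Finset.mem_Icc, Nat.not_odd_iff_even] at hk ⊢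
    refine ⟨⟨by omega, ?_⟩, ⟨k, by ring⟩⟩
    omega
  · intro m hm
    simp only [Finset.mem_filter, Nat.not_odd_iff_even] at hm
    obtain ⟨_, c, rfl⟩ := hm
    omega
  · intro k hk
    omega
  · intro m hm
    simp only [Finset.mem_filter, Finset.mem_Icc, Nat.not_odd_iff_even] at hm
    obtain ⟨⟨h1, h2⟩, c, rfl⟩ := hm
    have hc : c ≠ 0 := by omega
    have : (c + c) / 2 = c := by omega
    rw [this]
    have : c + c = 2 * c := by ring
    rw [this, padicValNat.mul (by norm_num) hc, padicValNat.self (by norm_num),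
      pow_add, pow_one]

lemma aux_rec (n : ℕ) :
    ∑ m ∈ Finset.Icc 1 n, 2 ^ padicValNat 2 m
      ≤ n + 2 * ∑ k ∈ Finset.Icc 1 (n / 2), 2 ^ padicValNat 2 k := by
  rw [← Finset.sum_filter_add_sum_filter_not (Finset.Icc 1 n) (fun m => Odd m)]
  rw [aux_even_sum]
  have h1 : ∑ m ∈ (Finset.Icc 1 n).filter (fun m => Odd m), 2 ^ padicValNat 2 m ≤ n := by
    calc ∑ m ∈ (Finset.Icc 1 n).filter (fun m => Odd m), 2 ^ padicValNat 2 m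
        = ∑ m ∈ (Finset.Icc 1 n).filter (fun m => Odd m), 1 := by
          apply Finset.sum_congr rfl
          intro m hm
          simp only [Finset.mem_filter] at hm
          rw [padicValNat.eq_zero_of_not_dvd (by
            rw [Nat.two_dvd_ne_zero]; exact Nat.odd_iff.mp hm.2), pow_zero]
      _ ≤ ∑ m ∈ Finset.Icc 1 n, 1 := Finset.sum_le_sum_of_subset (Finset.filter_subset _ _)
      _ = n := by simp
  omega

lemma aux_bound (n : ℕ) :
    ∑ m ∈ Finset.Icc 1 n, 2 ^ padicValNat 2 m ≤ n * (Nat.log 2 n + 3) := by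
  induction n using Nat.strong_induction_on with
  | _ n ih =>
    rcases Nat.lt_or_ge n 2 with h | h
    · interval_cases n <;> simp
    · have hrec := aux_rec n
      have hhalf : n / 2 < n := Nat.div_lt_self (by omega) (by norm_num)
      have hih := ih (n / 2) hhalf
      have hlog : Nat.log 2 (n / 2) = Nat.log 2 n - 1 := Nat.log_div_base 2 n
      have hlog1 : 1 ≤ Nat.log 2 n := Nat.log_pos (by norm_num) h
      calc ∑ m ∈ Finset.Icc 1 n, 2 ^ padicValNat 2 m
          ≤ n + 2 * ∑ k ∈ Finset.Icc 1 (n / 2), 2 ^ padicValNat 2 k := hrec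
        _ ≤ n + 2 * ((n / 2) * (Nat.log 2 (n / 2) + 3)) := by
            have := Nat.mul_le_mul_left 2 hih; omega
        _ ≤ n + n * (Nat.log 2 n + 2) := by
            rw [hlog]
            have h2 : 2 * (n / 2) ≤ n := Nat.mul_div_le n 2
            have h3 : 2 * ((n / 2) * (Nat.log 2 n - 1 + 3))
                = (2 * (n / 2)) * (Nat.log 2 n - 1 + 3) := by ring
            have h4 : (2 * (n / 2)) * (Nat.log 2 n - 1 + 3) ≤ n * (Nat.log 2 n + 2) :=
              Nat.mul_le_mul h2 (by omega)
            omega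
        _ = n * (Nat.log 2 n + 3) := by ring
      
/-- the total size of all FAR arrays is `O(n log n)`:
`∑_{m=1}^{n} 3·2^{ν₂(m)} ≤ 3·n·(⌊log₂ n⌋ + 3)`. -/
theorem stmt_6 (n : ℕ) (hn : 1 ≤ n) :
    ∑ m ∈ Finset.Icc 1 n, 3 * 2 ^ (padicValNat 2 m) ≤
      3 * n * (Nat.log 2 n + 3) := by
  have := aux_bound n
  calc ∑ m ∈ Finset.Icc 1 n, 3 * 2 ^ (padicValNat 2 m)
      = 3 * ∑ m ∈ Finset.Icc 1 n, 2 ^ padicValNat 2 m := by rw [Finset.mul_sum]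
    _ ≤ 3 * (n * (Nat.log 2 n + 3)) := Nat.mul_le_mul_left 3 this
    _ = 3 * n * (Nat.log 2 n + 3) := by ring
end

section
/- Let a : ℕ → ℤ and let k be a positive integer such that |a(t+1) − a(t)| ≤ k for all t ∈ ℕ. Let i, i₁, p be natural numbers with i₁ ≤ i and i − i₁ < 2^p, and let x be an integer with k·2^p ≤ a(i) − x. Then for every index j with i₁ ≤ j ≤ i one has a(j) > x; consequently, the set {j : j ≥ i ∧ a(j) ≤ x} equals the set {j : j ≥ i₁ ∧ a(j) ≤ x}, so the first element to the right of position i with value at most x is also the first element to the right of position i₁ with value at most x. -/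
lemma step_bound (a : ℕ → ℤ) (k : ℤ)
    (hstep : ∀ t : ℕ, |a (t + 1) - a t| ≤ k) :
    ∀ (j n : ℕ), |a (j + n) - a j| ≤ k * n := by
  intro j n
  induction n with
  | zero => simp
  | succ n ih =>
    have h := hstep (j + n)
    calc |a (j + (n + 1)) - a j|
        = |(a (j + n + 1) - a (j + n)) + (a (j + n) - a j)| := by ring_nf
      _ ≤ |a (j + n + 1) - a (j + n)| + |a (j + n) - a j| := abs_add_le _ _
      _ ≤ k + k * n := add_le_add h ih
      _ = k * (n + 1) := by ring
    -- done
    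
/-- in the two-level structure (steps bounded by `k`), all entries
between `i₁` and `i` exceed `x`, hence the FS answer sets at `i` and `i₁`
coincide. -/
theorem stmt_8 (a : ℕ → ℤ) (k : ℤ) (hk : 0 < k)
    (hstep : ∀ t : ℕ, |a (t + 1) - a t| ≤ k)
    (i i₁ p : ℕ) (h₁ : i₁ ≤ i) (h₂ : i - i₁ < 2 ^ p)
    (x : ℤ) (hx : k * 2 ^ p ≤ a i - x) :
    (∀ j : ℕ, i₁ ≤ j → j ≤ i → x < a j) ∧
      {j : ℕ | i ≤ j ∧ a j ≤ x} = {j : ℕ | i₁ ≤ j ∧ a j ≤ x} := by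
  have key : ∀ j : ℕ, i₁ ≤ j → j ≤ i → x < a j := by
    intro j hj1 hj2
    obtain ⟨n, rfl⟩ := Nat.exists_eq_add_of_le hj2
    have hb := step_bound a k hstep j n
    have hn : (n : ℤ) ≤ 2 ^ p - 1 := by
      have hlt : (n : ℤ) < 2 ^ p := by exact_mod_cast (show n < 2 ^ p by omega)
      linarith
    have hkn : k * n ≤ k * 2 ^ p - k := by
      have := mul_le_mul_of_nonneg_left hn hk.le
      linarith
    have : a (j + n) - a j ≤ k * n := (abs_le.mp hb).2
    linarith
  refine ⟨key, ?_⟩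
  ext j
  simp only [Set.mem_setOf_eq]
  constructor
  · rintro ⟨hj, hja⟩; exact ⟨le_trans h₁ hj, hja⟩
  · rintro ⟨hj, hja⟩
    refine ⟨?_, hja⟩
    by_contra h
    exact absurd hja (not_le.mpr (key j hj (by omega)))
end
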